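/- arXiv:1407.2955 — 2 statements merged into one kernel-verified Lean document; each statement's English description precedes it below -/
import Mathlib

section
/- Proposition (Prop. 2, positive zeros from a singular Jacobian-type matrix): Let A' ∈ ℝ^{s×r'}, V' ∈ ℝ^{n×r'}, S ⊆ ℝⁿ a subspace of dimension s, and Z a matrix whose rows form a basis of S^⊥. Suppose η ∈ ℝ^{r'}_{>0} satisfies A'η ∈ ℝˢ_{>0} and det(M_{η,λ}) = 0 for some λ ∈ ℝⁿ_{>0}, where M_{κ,λ} = (Z; A' diag(κ) V'ᵗ diag(λ)). Then there exist distinct x, y ∈ ℝⁿ_{>0} with x - y ∈ S and κ ∈ ℝ^{r'}_{>0} such that A'(κ ∘ x^{V'}) = A'(κ ∘ y^{V'}) and this common value lies in ℝˢ_{>0}. -/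
open Filter Real Matrix

noncomputable def phi (t : ℝ) : ℝ := if t = 0 then 1 else t / (Real.exp t - 1)

lemma phi_pos (t : ℝ) : 0 < phi t := by
  unfold phi
  split
  · norm_num
  · rename_i h
    rcases lt_or_gt_of_ne h with h' | h'
    · apply div_pos_iff.2
      right
      exact ⟨h', by simpa using Real.exp_lt_one_iff.2 h'⟩
    · apply div_pos h'
      have : (1:ℝ) < Real.exp t := Real.one_lt_exp_iff.2 h'
      linarith

lemma phi_mul (t : ℝ) : phi t * (Real.exp t - 1) = t := by
  unfold phi
  split
  · simp [*]
  · rename_i h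
    rw [div_mul_cancel₀]
    intro hc
    exact h ((Real.exp_eq_one_iff t).1 (by linarith))

lemma phi_tendsto : Tendsto phi (nhds 0) (nhds 1) := by
  have h1 : Tendsto (slope Real.exp 0) (nhdsWithin 0 {0}ᶜ) (nhds 1) := by
    have := (Real.hasDerivAt_exp 0)
    rw [hasDerivAt_iff_tendsto_slope] at this
    simpa using this
  have h2 : Tendsto (fun t => (slope Real.exp 0 t)⁻¹) (nhdsWithin 0 {0}ᶜ) (nhds 1) := by
    simpa using h1.inv₀ (by norm_num)
  have h3 : Tendsto phi (nhdsWithin 0 {0}ᶜ) (nhds 1) := by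
    apply h2.congr'
    filter_upwards [self_mem_nhdsWithin] with t ht
    simp only [Set.mem_compl_iff, Set.mem_singleton_iff] at ht
    rw [slope_def_field, phi, if_neg ht, Real.exp_zero, inv_div]
    ring_nf
  rw [← nhdsNE_sup_pure (0:ℝ), tendsto_sup]
  refine ⟨h3, ?_⟩
  simpa [phi] using tendsto_pure_nhds phi 0 |>.congr (by intro; rfl) |>.mono_right le_rfl

/-- The vector of generalised monomials `x^V` given by the columns of `V`. -/
noncomputable def monos {n r : ℕ} (V : Matrix (Fin n) (Fin r) ℝ) (x : Fin n → ℝ) :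
    Fin r → ℝ :=
  fun j => ∏ i, x i ^ V i j

lemma monos_pos {n r : ℕ} (V : Matrix (Fin n) (Fin r) ℝ) {x : Fin n → ℝ}
    (hx : ∀ i, 0 < x i) (j : Fin r) : 0 < monos V x j :=
  Finset.prod_pos fun i _ => Real.rpow_pos_of_pos (hx i) _

lemma monos_exp_mul {n r : ℕ} (V : Matrix (Fin n) (Fin r) ℝ) (t y : Fin n → ℝ)
    (hy : ∀ i, 0 < y i) (j : Fin r) :
    monos V (fun i => Real.exp (t i) * y i) j
      = Real.exp (∑ i, t i * V i j) * monos V y j := by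
  unfold monos
  rw [Real.exp_sum, ← Finset.prod_mul_distrib]
  apply Finset.prod_congr rfl
  intro i _
  rw [Real.mul_rpow (Real.exp_pos _).le (hy i).le]
  congr 1
  rw [Real.rpow_def_of_pos (Real.exp_pos _), Real.log_exp]

/-- The matrix `M_{κ,λ}` obtained by stacking `Z` on top of `A' diag(κ) V'ᵗ diag(λ)`. -/
noncomputable def Mmat {n s r' : ℕ} (hsn : s ≤ n)
    (Z : Matrix (Fin (n - s)) (Fin n) ℝ) (A' : Matrix (Fin s) (Fin r') ℝ)
    (V' : Matrix (Fin n) (Fin r') ℝ) (κ : Fin r' → ℝ) (l : Fin n → ℝ) :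
    Matrix (Fin n) (Fin n) ℝ :=
  (Matrix.fromRows Z (A' * Matrix.diagonal κ * V'.transpose * Matrix.diagonal l)).submatrix
    (fun i : Fin n => finSumFinEquiv.symm (finCongr (Nat.sub_add_cancel hsn).symm i)) id

theorem stmt_11 {n s r' : ℕ} (hsn : s ≤ n)
    (A' : Matrix (Fin s) (Fin r') ℝ) (V' : Matrix (Fin n) (Fin r') ℝ)
    (S : Submodule ℝ (Fin n → ℝ)) (hS : Module.finrank ℝ S = s)
    (Z : Matrix (Fin (n - s)) (Fin n) ℝ)
    (hZ : ∀ x : Fin n → ℝ, Z.mulVec x = 0 ↔ x ∈ S)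
    (η : Fin r' → ℝ) (hη : ∀ j, 0 < η j)
    (hAη : ∀ i, 0 < A'.mulVec η i)
    (l : Fin n → ℝ) (hl : ∀ i, 0 < l i)
    (hdet : (Mmat hsn Z A' V' η l).det = 0) :
    ∃ x y : Fin n → ℝ, ∃ κ : Fin r' → ℝ,
      (∀ i, 0 < x i) ∧ (∀ i, 0 < y i) ∧ x ≠ y ∧ x - y ∈ S ∧ (∀ j, 0 < κ j) ∧
      A'.mulVec (fun j => κ j * monos V' x j) =
        A'.mulVec (fun j => κ j * monos V' y j) ∧
      (∀ i, 0 < A'.mulVec (fun j => κ j * monos V' x j) i) := by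
  classical
  obtain ⟨v, hv0, hv⟩ := Matrix.exists_mulVec_eq_zero_iff.2 hdet
  -- decode the kernel condition
  have hZv : Z.mulVec v = 0 := by
    funext a
    have h := congrFun hv (finCongr (Nat.sub_add_cancel hsn) (finSumFinEquiv (Sum.inl a)))
    simpa [Mmat, Matrix.mulVec, Matrix.submatrix_apply, dotProduct, Matrix.fromRows_apply_inl] using h
  set c : Fin r' → ℝ := fun j => ∑ k, V' k j * (l k * v k) with hc
  have hker : ∀ i, ∑ j, A' i j * (η j * c j) = 0 := by
    intro i
    have h := congrFun hv (finCongr (Nat.sub_add_cancel hsn) (finSumFinEquiv (Sum.inr i)))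
    simp [Mmat, Matrix.mulVec, Matrix.submatrix_apply, dotProduct, Matrix.fromRows_apply_inr] at h
    have hentry : ∀ x, (A' * Matrix.diagonal η * V'.transpose) i x = ∑ q, A' i q * η q * V' x q := by
      intro x
      rw [Matrix.mul_apply]
      exact Finset.sum_congr rfl fun q _ => by rw [Matrix.mul_diagonal, Matrix.transpose_apply]
    rw [← h]
    simp_rw [hc, hentry, Finset.sum_mul, Finset.mul_sum]
    rw [Finset.sum_comm]
    exact Finset.sum_congr rfl fun j _ => Finset.sum_congr rfl fun k _ => by ring
  -- choose a small ε ≠ 0 keeping positivity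
  have hev : ∀ᶠ ε : ℝ in nhds 0, ∀ i, 0 < ∑ j, A' i j * (η j * phi (ε * c j)) := by
    rw [eventually_all]
    intro i
    have hcont : Tendsto (fun ε : ℝ => ∑ j, A' i j * (η j * phi (ε * c j))) (nhds 0)
        (nhds (∑ j, A' i j * (η j * phi (0 * c j)))) := by
      apply tendsto_finset_sum
      intro j _
      apply Tendsto.const_mul
      apply Tendsto.const_mul
      have hlin : Tendsto (fun ε : ℝ => ε * c j) (nhds 0) (nhds 0) := by
        simpa using (tendsto_id (x := nhds (0:ℝ))).mul_const (c j)
      have h01 : phi (0 * c j) = 1 := by simp [phi]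
      rw [h01]
      exact phi_tendsto.comp hlin
    have hpos0 : 0 < ∑ j, A' i j * (η j * phi (0 * c j)) := by
      have : ∑ j, A' i j * (η j * phi (0 * c j)) = A'.mulVec η i := by
        simp [Matrix.mulVec, dotProduct, phi]
      rw [this]; exact hAη i
    exact hcont.eventually (eventually_gt_nhds hpos0)
  have hev2 : ∀ᶠ ε : ℝ in nhdsWithin 0 {0}ᶜ,
      (∀ i, 0 < ∑ j, A' i j * (η j * phi (ε * c j))) ∧ ε ≠ 0 := by
    refine Filter.Eventually.and (hev.filter_mono nhdsWithin_le_nhds) ?_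
    filter_upwards [self_mem_nhdsWithin] with ε hε
    simpa using hε
  obtain ⟨ε, hεpos, hεne⟩ := hev2.exists
  -- the construction
  set t : Fin n → ℝ := fun i => ε * (l i * v i) with ht
  set y : Fin n → ℝ := fun i => phi (t i) / l i with hy
  set x : Fin n → ℝ := fun i => Real.exp (t i) * y i with hx
  have hypos : ∀ i, 0 < y i := fun i => div_pos (phi_pos _) (hl i)
  have hxpos : ∀ i, 0 < x i := fun i => mul_pos (Real.exp_pos _) (hypos i)
  have hmy : ∀ j, 0 < monos V' y j := monos_pos V' hypos
  set κ : Fin r' → ℝ := fun j => η j * phi (ε * c j) / monos V' y j with hκ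
  have hκpos : ∀ j, 0 < κ j := fun j =>
    div_pos (mul_pos (hη j) (phi_pos _)) (hmy j)
  have hsum : ∀ j, ∑ i, t i * V' i j = ε * c j := by
    intro j
    rw [hc, Finset.mul_sum]
    exact Finset.sum_congr rfl fun k _ => by simp [ht]; ring
  have hmx : ∀ j, monos V' x j = Real.exp (ε * c j) * monos V' y j := by
    intro j
    rw [hx, monos_exp_mul V' t y hypos j, hsum j]
  have hκy : ∀ j, κ j * monos V' y j = η j * phi (ε * c j) := fun j =>
    div_mul_cancel₀ _ (hmy j).ne'
  have hκx : ∀ j, κ j * monos V' x j = κ j * monos V' y j + η j * (ε * c j) := by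
    intro j
    have h2 : κ j * (Real.exp (ε * c j) * monos V' y j)
        = η j * phi (ε * c j) * Real.exp (ε * c j) := by
      rw [← hκy j]; ring
    rw [hmx j, h2, hκy j]
    linear_combination η j * phi_mul (ε * c j)
  have hsubv : x - y = ε • v := by
    funext i
    have hli : l i ≠ 0 := (hl i).ne'
    simp only [Pi.sub_apply, Pi.smul_apply, smul_eq_mul]
    have h1 : x i - y i = y i * (Real.exp (t i) - 1) := by simp only [hx]; ring
    rw [h1]
    have h2 : y i * (Real.exp (t i) - 1) = (phi (t i) * (Real.exp (t i) - 1)) / l i := by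
      simp only [hy]; ring
    rw [h2, phi_mul (t i)]
    simp only [ht]
    field_simp
  refine ⟨x, y, κ, hxpos, hypos, ?_, ?_, hκpos, ?_, ?_⟩
  · intro hxy
    apply hv0
    have : x - y = 0 := by rw [hxy]; simp
    rw [hsubv] at this
    exact (smul_eq_zero.1 this).resolve_left hεne
  · rw [hsubv]
    exact S.smul_mem ε ((hZ v).1 hZv)
  · funext i
    simp only [Matrix.mulVec, dotProduct]
    have hterm : ∀ j, A' i j * (κ j * monos V' x j)
        = A' i j * (κ j * monos V' y j) + ε * (A' i j * (η j * c j)) := by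
      intro j
      rw [hκx j]
      ring
    rw [Finset.sum_congr rfl fun j _ => hterm j, Finset.sum_add_distrib, ← Finset.mul_sum,
      hker i, mul_zero, add_zero]
  · intro i
    have heq : A'.mulVec (fun j => κ j * monos V' x j) i
        = (∑ j, A' i j * (η j * phi (ε * c j))) + ε * ∑ j, A' i j * (η j * c j) := by
      simp only [Matrix.mulVec, dotProduct]
      have hterm : ∀ j, A' i j * (κ j * monos V' x j)
          = A' i j * (η j * phi (ε * c j)) + ε * (A' i j * (η j * c j)) := by
        intro j
        rw [hκx j, hκy j]
        ring
      rw [Finset.sum_congr rfl fun j _ => hterm j, Finset.sum_add_distrib, ← Finset.mul_sum]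
    rw [heq, hker i, mul_zero, add_zero]
    exact hεpos i
end

section
/- Let γ ∈ ℝⁿ, λ ∈ ℝⁿ_{>0}, V' ∈ ℝ^{n×r'}, η ∈ ℝ^{r'}_{>0}, and suppose A' diag(η) V'ᵗ diag(λ) γ = 0 for A' ∈ ℝ^{s×r'}. Define x_i = γ_i/(e^{γ_iλ_i}-1) (x_i = 1 if γ_i = 0), y_i = x_i e^{γ_iλ_i}, and κ = (η ∘ V'ᵗ(λ∘γ)) / (y^{V'} - x^{V'}) (componentwise division, 0/0 := 1, using that each nonzero numerator and denominator entry have the same sign). Then κ has strictly positive entries and A'(κ ∘ (y^{V'} - x^{V'})) = 0. -/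
theorem stmt_12 {n s r' : ℕ}
    (A' : Matrix (Fin s) (Fin r') ℝ) (V' : Matrix (Fin n) (Fin r') ℝ)
    (γ : Fin n → ℝ) (l : Fin n → ℝ) (hl : ∀ i, 0 < l i)
    (η : Fin r' → ℝ) (hη : ∀ j, 0 < η j)
    (hker : (A' * Matrix.diagonal η * V'.transpose * Matrix.diagonal l).mulVec γ = 0)
    (x y : Fin n → ℝ) (κ : Fin r' → ℝ)
    (hx : ∀ i, x i = if γ i = 0 then 1 else γ i / (Real.exp (γ i * l i) - 1))
    (hy : ∀ i, y i = x i * Real.exp (γ i * l i))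
    (hκ : ∀ j, κ j = if monos V' y j - monos V' x j = 0 then 1
        else η j * (∑ i, V' i j * (l i * γ i)) / (monos V' y j - monos V' x j)) :
    (∀ j, 0 < κ j) ∧
    A'.mulVec (fun j => κ j * (monos V' y j - monos V' x j)) = 0 := by
  have hx0 : ∀ i, 0 < x i := by
    intro i
    rw [hx i]
    split_ifs with h
    · norm_num
    · rcases lt_or_gt_of_ne h with hneg | hpos
      · exact div_pos_of_neg_of_neg hneg
          (sub_neg.mpr (Real.exp_lt_one_iff.mpr (mul_neg_of_neg_of_pos hneg (hl i))))
      · exact div_pos hpos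
          (sub_pos.mpr (Real.one_lt_exp_iff.mpr (mul_pos hpos (hl i))))
  set S : Fin r' → ℝ := fun j => ∑ i, V' i j * (l i * γ i) with hS
  have hmx0 : ∀ j, 0 < monos V' x j := fun j =>
    Finset.prod_pos fun i _ => Real.rpow_pos_of_pos (hx0 i) _
  have hmon : ∀ j, monos V' y j = monos V' x j * Real.exp (S j) := by
    intro j
    rw [hS]
    unfold monos
    rw [Real.exp_sum, ← Finset.prod_mul_distrib]
    apply Finset.prod_congr rfl
    intro i _
    rw [hy i, Real.mul_rpow (hx0 i).le (Real.exp_pos _).le, ← Real.exp_mul,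
      mul_comm (γ i) (l i), mul_comm (l i * γ i) (V' i j)]
  have hdiff : ∀ j, monos V' y j - monos V' x j = monos V' x j * (Real.exp (S j) - 1) := by
    intro j; rw [hmon j]; ring
  -- if the difference vanishes then so does S j
  have hzero : ∀ j, monos V' y j - monos V' x j = 0 → S j = 0 := by
    intro j h
    rw [hdiff j] at h
    rcases mul_eq_zero.mp h with h' | h'
    · exact absurd h' (hmx0 j).ne'
    · have : Real.exp (S j) = 1 := by linarith
      rw [← Real.exp_zero] at this
      exact Real.exp_injective this
  -- S j and the difference have the same sign
  have hsame : ∀ j, 0 < S j → 0 < monos V' y j - monos V' x j := by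
    intro j h
    rw [hdiff j]
    exact mul_pos (hmx0 j) (sub_pos.mpr (Real.one_lt_exp_iff.mpr h))
  have hsame' : ∀ j, S j < 0 → monos V' y j - monos V' x j < 0 := by
    intro j h
    rw [hdiff j]
    exact mul_neg_of_pos_of_neg (hmx0 j) (sub_neg.mpr (Real.exp_lt_one_iff.mpr h))
  have hκpos : ∀ j, 0 < κ j := by
    intro j
    rw [hκ j]
    split_ifs with h
    · norm_num
    · rw [mul_div_assoc]
      refine mul_pos (hη j) ?_
      rcases lt_trichotomy (S j) 0 with hs | hs | hs
      · exact div_pos_of_neg_of_neg hs (hsame' j hs)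
      · exact absurd (by rw [hdiff j, hs, Real.exp_zero]; ring) h
      · exact div_pos hs (hsame j hs)
  refine ⟨hκpos, ?_⟩
  have hvec : (fun j => κ j * (monos V' y j - monos V' x j)) = fun j => η j * S j := by
    funext j
    by_cases h : monos V' y j - monos V' x j = 0
    · rw [h, hzero j h, mul_zero, mul_zero]
    · rw [hκ j, if_neg h, div_mul_cancel₀ _ h]
  rw [hvec]
  simp only [← Matrix.mulVec_mulVec] at hker
  have heq : (Matrix.diagonal η).mulVec (V'.transpose.mulVec ((Matrix.diagonal l).mulVec γ))
      = fun j => η j * S j := by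
    funext j
    simp only [Matrix.mulVec, dotProduct, Matrix.diagonal_apply,
      Matrix.transpose_apply, ite_mul, zero_mul, Finset.sum_ite_eq, Finset.mem_univ,
      if_true, hS]
  rw [← heq]
  exact hker
end
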